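/- Let E be a category with pullbacks and let f : A ⟶ B and g : X ⟶ Y be morphisms. The following are equivalent: (i) for every object Z and every pair of morphisms b : Z ⟶ B and y : Z ⟶ Y, the base changes f_Z : A ×_B Z ⟶ Z and g_Z : X ×_Y Z ⟶ Z, viewed as morphisms of the slice category E/Z with targets the terminal object 𝟙_Z of E/Z, satisfy f_Z ⊥ g_Z in E/Z; (ii) for every morphism Z ⟶ B and every morphism Z' ⟶ Y, the base changes f_Z : A ×_B Z ⟶ Z and g_{Z'} : X ×_Y Z' ⟶ Z' satisfy f_Z ⊥ g_{Z'} in E. -/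

import Mathlib

open CategoryTheory Limits

/-- `f` is orthogonal to `g` (`f ⊥ g`): every commutative square from `f` to `g` admits a
unique diagonal filler. -/
def Orth {E : Type*} [Category E] {A B X Y : E} (f : A ⟶ B) (g : X ⟶ Y) : Prop :=
  ∀ (u : A ⟶ X) (v : B ⟶ Y), u ≫ g = f ≫ v →
    ∃! d : B ⟶ X, f ≫ d = u ∧ d ≫ g = v

/-- For maps `f : A ⟶ B` and `g : X ⟶ Y` in a category with pullbacks,
the following are equivalent: (i) for every `Z` with maps `b : Z ⟶ B`, `y : Z ⟶ Y`, the base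
changes `f_Z` and `g_Z`, viewed as maps to the terminal object `𝟙 Z` of the slice `E/Z`,
are orthogonal in `E/Z`; (ii) for every `Z ⟶ B` and `Z' ⟶ Y`, the base changes `f_Z` and
`g_{Z'}` are orthogonal in `E`. -/
theorem goodwillie_stmt_7 {E : Type*} [Category E] [HasPullbacks E]
    {A B X Y : E} (f : A ⟶ B) (g : X ⟶ Y) :
    (∀ {Z P Q : E} (b : Z ⟶ B) (y : Z ⟶ Y)
        (p : P ⟶ A) (fZ : P ⟶ Z) (q : Q ⟶ X) (gZ : Q ⟶ Z),
        IsPullback p fZ f b → IsPullback q gZ g y →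
        Orth (E := Over Z)
          (Over.homMk fZ : Over.mk fZ ⟶ Over.mk (𝟙 Z))
          (Over.homMk gZ : Over.mk gZ ⟶ Over.mk (𝟙 Z))) ↔
    (∀ {Z P : E} (z : Z ⟶ B) (p : P ⟶ A) (fZ : P ⟶ Z), IsPullback p fZ f z →
      ∀ {Z' Q : E} (z' : Z' ⟶ Y) (q : Q ⟶ X) (gZ' : Q ⟶ Z'), IsPullback q gZ' g z' →
        Orth fZ gZ') := by
  constructor
  · -- (i) → (ii)
    intro h Z P z p fZ hP Z' Q z' q gZ' hQ u v huv
    set W := pullback gZ' v with hWdef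
    have hW : IsPullback (pullback.fst gZ' v) (pullback.snd gZ' v) gZ' v :=
      IsPullback.of_hasPullback gZ' v
    have hBig : IsPullback (pullback.fst gZ' v ≫ q) (pullback.snd gZ' v) g (v ≫ z') :=
      hW.paste_horiz hQ
    have horth := h z (v ≫ z') p fZ (pullback.fst gZ' v ≫ q) (pullback.snd gZ' v) hP hBig
    have hu : u ≫ gZ' = fZ ≫ v := huv
    let ut : P ⟶ W := pullback.lift u fZ hu
    have hut : ut ≫ pullback.snd gZ' v = fZ := pullback.lift_snd _ _ _
    obtain ⟨d, ⟨hd1, hd2⟩, hdu⟩ :=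
      horth (Over.homMk ut hut) (𝟙 _) (by
        ext
        simp [ut]; exact pullback.lift_snd _ _ _)
    have hd1' : fZ ≫ d.left = ut := congrArg CommaMorphism.left hd1
    have hdw : d.left ≫ pullback.snd gZ' v = 𝟙 Z := Over.w d
    refine ⟨d.left ≫ pullback.fst gZ' v, ⟨?_, ?_⟩, ?_⟩
    · rw [← Category.assoc, hd1']; simp [ut]; exact pullback.lift_fst _ _ _
    · rw [Category.assoc, pullback.condition, ← Category.assoc, hdw, Category.id_comp]
    · intro d' ⟨h1, h2⟩
      have he : d' ≫ gZ' = 𝟙 Z ≫ v := by simpa using h2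
      let e : Z ⟶ W := pullback.lift d' (𝟙 Z) he
      have he1 : e ≫ pullback.snd gZ' v = 𝟙 Z := pullback.lift_snd _ _ _
      have key : Over.homMk e he1 = d := by
        apply hdu
        constructor
        · ext
          apply pullback.hom_ext <;> simp [e, ut, h1]
          · erw [pullback.lift_fst, pullback.lift_fst, h1]
          · erw [pullback.lift_snd, pullback.lift_snd, Category.comp_id]
        · ext
          simp [he1]
      have : e = d.left := congrArg CommaMorphism.left key
      rw [← this]
      simp [e]; exact (pullback.lift_fst _ _ _).symm
  · -- (ii) → (i)
    intro h Z P Q b y p fZ q gZ hP hQ u v huv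
    have horth := h b p fZ hP y q gZ hQ
    have hv : v.left = 𝟙 Z := by simpa using Over.w v
    have hsq : u.left ≫ gZ = fZ ≫ v.left := by
      have := congrArg CommaMorphism.left huv
      simpa using this
    obtain ⟨d, ⟨hd1, hd2⟩, hdu⟩ := horth u.left v.left hsq
    have hdw : d ≫ gZ = 𝟙 Z := by rw [hd2, hv]
    refine ⟨Over.homMk d hdw, ⟨?_, ?_⟩, ?_⟩
    · ext; simpa using hd1
    · ext; simpa [hv] using hd2
    · intro d' ⟨h1, h2⟩
      have h1' : fZ ≫ d'.left = u.left := by simpa using congrArg CommaMorphism.left h1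
      have h2' : d'.left ≫ gZ = v.left := by
        rw [hv]; exact Over.w d'
      have : d'.left = d := hdu d'.left ⟨h1', h2'⟩
      ext
      exact this
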